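/- For every integer n ≥ 2, the total quasi projector satisfies the recursion Φ_n = G · (vol_{n−1} · I − Φ_{n−1}), where I is the N×N identity matrix. -/

import Mathlib

open Matrix BigOperators Finset

/-- The submatrix of `A` formed by the rows indexed by the subset `S`. -/
def subMat {M N : ℕ} (A : Matrix (Fin M) (Fin N) ℝ) (S : Finset (Fin M)) :
    Matrix {i // i ∈ S} (Fin N) ℝ :=
  A.submatrix (fun i => (i : Fin M)) id

/-- The squared volume `v_S² = det (A_S A_Sᵀ)` of the parallelepiped spanned by
the rows of `A` indexed by `S`. -/
noncomputable def volSq {M N : ℕ} (A : Matrix (Fin M) (Fin N) ℝ) (S : Finset (Fin M)) : ℝ :=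
  (subMat A S * (subMat A S)ᵀ).det

/-- The quasi projector `Q_S = A_Sᵀ · adj(A_S A_Sᵀ) · A_S`. -/
noncomputable def quasiProj {M N : ℕ} (A : Matrix (Fin M) (Fin N) ℝ) (S : Finset (Fin M)) :
    Matrix (Fin N) (Fin N) ℝ :=
  (subMat A S)ᵀ * (subMat A S * (subMat A S)ᵀ).adjugate * subMat A S

/-- The total quasi projector `Φ_n = Σ_{|S| = n} Q_S`. -/
noncomputable def totalQuasiProj {M N : ℕ} (A : Matrix (Fin M) (Fin N) ℝ) (n : ℕ) :
    Matrix (Fin N) (Fin N) ℝ :=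
  ∑ S ∈ Finset.univ.powersetCard n, quasiProj A S

/-- The sum of squared `n`-volumes `vol_n = Σ_{|S| = n} v_S²` (with `vol_0 = 1`). -/
noncomputable def vol {M N : ℕ} (A : Matrix (Fin M) (Fin N) ℝ) (n : ℕ) : ℝ :=
  ∑ S ∈ Finset.univ.powersetCard n, volSq A S

section AuxLemmas

variable {R : Type*} [CommRing R] {ι : Type*} [Fintype ι] [DecidableEq ι]

lemma det_updateRow_expand (B : Matrix ι ι R) (m : ι) (c : ι → R) (v : ι → ι → R) :
    (B.updateRow m (∑ p, c p • v p)).det = ∑ p, c p * (B.updateRow m (v p)).det := by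
  have h : ∀ w : ι → R, (B.updateRow m w).det
      = (Matrix.detRowAlternating : (ι → R) [⋀^ι]→ₗ[R] R) (Function.update B m w) := fun w => rfl
  rw [h]
  have h2 := MultilinearMap.map_update_sum
    (Matrix.detRowAlternating (R := R) (n := ι)).toMultilinearMap Finset.univ m
    (fun p => c p • v p) B
  rw [show ((Matrix.detRowAlternating : (ι → R) [⋀^ι]→ₗ[R] R) (Function.update B m (∑ p, c p • v p)))
      = (Matrix.detRowAlternating (R := R) (n := ι)).toMultilinearMap
        (Function.update B m (∑ p, c p • v p)) from rfl, h2]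
  refine Finset.sum_congr rfl fun p _ => ?_
  erw [MultilinearMap.map_update_smul, smul_eq_mul]
  congr 1

lemma det_eq_det_submatrix_ne (E : Matrix ι ι R) (m : ι) (h : E m = Pi.single m 1) :
    E.det = (E.submatrix (fun p : {p : ι // p ≠ m} => (p : ι))
      (fun p : {p : ι // p ≠ m} => (p : ι))).det := by
  classical
  let e : {p : ι // p = m} ⊕ {p : ι // ¬ p = m} ≃ ι := Equiv.sumCompl (· = m)
  have hdet : E.det = (E.submatrix e e).det := (det_submatrix_equiv_self e E).symm
  have hblock : E.submatrix e e =
      Matrix.fromBlocks 1 0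
        (E.submatrix (fun p : {p : ι // ¬ p = m} => (p : ι)) (fun p : {p : ι // p = m} => (p : ι)))
        (E.submatrix (fun p : {p : ι // ¬ p = m} => (p : ι)) (fun p : {p : ι // ¬ p = m} => (p : ι))) := by
    ext i j
    cases i with
    | inl a =>
      cases j with
      | inl b =>
        have ha : (a : ι) = m := a.2
        have hb : (b : ι) = m := b.2
        simp [e, Matrix.fromBlocks, ha, hb, h, Pi.single_apply,
          Subsingleton.elim a b, Matrix.one_apply]
      | inr b =>
        have ha : (a : ι) = m := a.2
        simp [e, Matrix.fromBlocks, ha, h, Pi.single_apply, b.2]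
    | inr a =>
      cases j with
      | inl b => simp [e, Matrix.fromBlocks]
      | inr b => simp [e, Matrix.fromBlocks]
  rw [hdet, hblock, Matrix.det_fromBlocks_zero₁₂, Matrix.det_one, one_mul]

lemma adjugate_diag_eq (B : Matrix ι ι R) (m : ι) :
    B.adjugate m m = (B.submatrix (fun p : {p : ι // p ≠ m} => (p : ι))
      (fun p : {p : ι // p ≠ m} => (p : ι))).det := by
  rw [adjugate_apply, det_eq_det_submatrix_ne _ m (by simp)]
  congr 1
  ext p q
  simp [Matrix.updateRow_ne p.2]

lemma adjugate_offdiag_eq (B : Matrix ι ι R) {m q : ι} (hq : q ≠ m) :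
    B.adjugate m q = - ∑ p : {p : ι // p ≠ m}, B m (p : ι) *
      (B.submatrix (fun r : {p : ι // p ≠ m} => (r : ι))
        (fun r : {p : ι // p ≠ m} => (r : ι))).adjugate p ⟨q, hq⟩ := by
  classical
  set B' := B.submatrix (fun r : {p : ι // p ≠ m} => (r : ι))
      (fun r : {p : ι // p ≠ m} => (r : ι)) with hB'
  set M₁ := B.updateRow q (Pi.single m 1) with hM₁
  have hrow : M₁ m = ∑ p : ι, B m p • (Pi.single p 1 : ι → R) := by
    rw [hM₁, Matrix.updateRow_ne (Ne.symm hq)]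
    funext x
    simp [Pi.single_apply]
  have h1 : B.adjugate m q = (M₁.updateRow m (M₁ m)).det := by
    rw [adjugate_apply, Matrix.updateRow_eq_self]
  rw [h1, hrow, det_updateRow_expand]
  -- split off p = m
  have hsplit : ∑ p : ι, B m p * (M₁.updateRow m (Pi.single p 1)).det
      = B m m * (M₁.updateRow m (Pi.single m 1)).det
        + ∑ p ∈ Finset.univ.erase m, B m p * (M₁.updateRow m (Pi.single p 1)).det :=
    (Finset.add_sum_erase _ _ (Finset.mem_univ m)).symm
  have hzero : (M₁.updateRow m (Pi.single m 1)).det = 0 := by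
    refine Matrix.det_zero_of_row_eq (Ne.symm hq) ?_
    rw [Matrix.updateRow_self, Matrix.updateRow_ne hq, hM₁, Matrix.updateRow_self]
  rw [hsplit, hzero, mul_zero, zero_add]
  rw [Finset.sum_subtype (Finset.univ.erase m)
    (p := fun p => p ≠ m) (by simp) (f := fun p => B m p * (M₁.updateRow m (Pi.single p 1)).det)]
  rw [← Finset.sum_neg_distrib]
  refine Finset.sum_congr rfl fun p _ => ?_
  rw [← mul_neg]
  congr 1
  -- det (M₁.updateRow m (single p 1)) = - adjugate B' p ⟨q,hq⟩
  set M₂ := M₁.updateRow m (Pi.single (p : ι) 1) with hM₂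
  have hperm := Matrix.det_permute (Equiv.swap m q) M₂
  have hsign : Equiv.Perm.sign (Equiv.swap m q) = -1 := Equiv.Perm.sign_swap (Ne.symm hq)
  set M₃ := M₂.submatrix (Equiv.swap m q : Equiv.Perm ι) id with hM₃
  have hM₃m : M₃ m = Pi.single m 1 := by
    funext x
    rw [hM₃]
    simp only [Matrix.submatrix_apply, Equiv.swap_apply_left, id]
    rw [hM₂, Matrix.updateRow_ne hq, hM₁, Matrix.updateRow_self]
  have h3 : M₃.det = (M₃.submatrix (fun r : {r : ι // r ≠ m} => (r : ι))
      (fun r : {r : ι // r ≠ m} => (r : ι))).det := det_eq_det_submatrix_ne _ m hM₃m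
  have hsub : M₃.submatrix (fun r : {r : ι // r ≠ m} => (r : ι))
      (fun r : {r : ι // r ≠ m} => (r : ι)) = B'.updateRow ⟨q, hq⟩ (Pi.single p 1) := by
    ext i j
    rw [hM₃]
    by_cases hi : (i : ι) = q
    · have hi' : i = (⟨q, hq⟩ : {r : ι // r ≠ m}) := Subtype.ext hi
      rw [hi']
      simp only [Matrix.submatrix_apply, Matrix.updateRow_self, id]
      rw [Equiv.swap_apply_right]
      rw [hM₂, Matrix.updateRow_self]
      simp [Pi.single_apply, Subtype.ext_iff]
    · have hswap : Equiv.swap m q (i : ι) = (i : ι) := Equiv.swap_apply_of_ne_of_ne i.2 hi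
      have hi' : i ≠ (⟨q, hq⟩ : {r : ι // r ≠ m}) := fun h => hi (congrArg Subtype.val h)
      simp only [Matrix.submatrix_apply, id, hswap]
      rw [Matrix.updateRow_ne hi']
      rw [hM₂, Matrix.updateRow_ne i.2, hM₁, Matrix.updateRow_ne hi]
      rfl
  have hadj : (B'.updateRow ⟨q, hq⟩ (Pi.single p 1)).det = B'.adjugate p ⟨q, hq⟩ :=
    (adjugate_apply _ _ _).symm
  have : M₂.det = - M₃.det := by
    rw [hM₃] at hperm ⊢
    rw [hperm, hsign]
    push_cast
    ring
  rw [this, h3, hsub, hadj]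


lemma vecMulVec_mul' {N : ℕ} (w v : Fin N → ℝ) (X : Matrix (Fin N) (Fin N) ℝ) :
    Matrix.vecMulVec w v * X = Matrix.vecMulVec w (v ᵥ* X) := by
  ext i j
  simp only [Matrix.mul_apply, Matrix.vecMulVec_apply, Matrix.vecMul, dotProduct,
    Finset.mul_sum]
  exact Finset.sum_congr rfl fun l _ => by ring

lemma vecMul_quasiProj {M N : ℕ} (A : Matrix (Fin M) (Fin N) ℝ) {T : Finset (Fin M)}
    {m : Fin M} (hm : m ∈ T) :
    A m ᵥ* quasiProj A T = volSq A T • A m := by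
  unfold quasiProj
  rw [← Matrix.vecMul_vecMul, ← Matrix.vecMul_vecMul]
  have h1 : A m ᵥ* (subMat A T)ᵀ = (subMat A T * (subMat A T)ᵀ) ⟨m, hm⟩ := by
    funext t
    simp [Matrix.vecMul, dotProduct, Matrix.mul_apply, subMat]
  rw [h1]
  have h2 : (subMat A T * (subMat A T)ᵀ) ⟨m, hm⟩ ᵥ* (subMat A T * (subMat A T)ᵀ).adjugate
      = Pi.single (⟨m, hm⟩ : {i // i ∈ T}) (volSq A T) := by
    funext q
    have h3 : ((subMat A T * (subMat A T)ᵀ) * (subMat A T * (subMat A T)ᵀ).adjugate) ⟨m, hm⟩ q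
        = (volSq A T • (1 : Matrix {i // i ∈ T} {i // i ∈ T} ℝ)) ⟨m, hm⟩ q := by
      rw [Matrix.mul_adjugate]; rfl
    rw [show ((subMat A T * (subMat A T)ᵀ) ⟨m, hm⟩ ᵥ* (subMat A T * (subMat A T)ᵀ).adjugate) q
      = ((subMat A T * (subMat A T)ᵀ) * (subMat A T * (subMat A T)ᵀ).adjugate) ⟨m, hm⟩ q from rfl]
    rw [h3]
    simp [Matrix.smul_apply, Matrix.one_apply, Pi.single_apply, eq_comm, mul_comm]
  rw [h2, Matrix.single_vecMul]
  funext l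
  simp [subMat, mul_comm]

lemma lemB {M N : ℕ} (A : Matrix (Fin M) (Fin N) ℝ) {T : Finset (Fin M)}
    {m : Fin M} (hm : m ∈ T) :
    Matrix.vecMulVec (A m) (A m) * quasiProj A T
      = volSq A T • Matrix.vecMulVec (A m) (A m) := by
  rw [vecMulVec_mul', vecMul_quasiProj A hm]
  ext i j
  simp [Matrix.vecMulVec_apply, mul_comm, mul_left_comm]

def eraseEquiv {M : ℕ} {S : Finset (Fin M)} {m : Fin M} (hm : m ∈ S) :
    {i : Fin M // i ∈ S.erase m} ≃ {r : {i : Fin M // i ∈ S} // r ≠ ⟨m, hm⟩} where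
  toFun i := ⟨⟨(i : Fin M), Finset.mem_of_mem_erase i.2⟩,
    fun h => (Finset.ne_of_mem_erase i.2) (by simpa [Subtype.ext_iff] using h)⟩
  invFun r := ⟨((r : {i : Fin M // i ∈ S}) : Fin M),
    Finset.mem_erase.mpr ⟨fun h => r.2 (Subtype.ext h), (r : {i : Fin M // i ∈ S}).2⟩⟩
  left_inv i := rfl
  right_inv r := rfl

lemma lemA {M N : ℕ} (A : Matrix (Fin M) (Fin N) ℝ) (S : Finset (Fin M)) :
    quasiProj A S = ∑ m ∈ S, (volSq A (S.erase m) • Matrix.vecMulVec (A m) (A m)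
      - Matrix.vecMulVec (A m) (A m) * quasiProj A (S.erase m)) := by
  classical
  ext j k
  rw [Matrix.sum_apply]
  have hL : quasiProj A S j k
      = ∑ m : {i // i ∈ S}, (A (↑m) j * ∑ q : {i // i ∈ S},
          (subMat A S * (subMat A S)ᵀ).adjugate m q * A (↑q) k) := by
    show ((subMat A S)ᵀ * (subMat A S * (subMat A S)ᵀ).adjugate * subMat A S) j k = _
    simp only [Matrix.mul_apply, Matrix.transpose_apply, Finset.sum_mul]
    rw [Finset.sum_comm]
    refine Finset.sum_congr rfl fun m _ => ?_
    rw [Finset.mul_sum]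
    refine Finset.sum_congr rfl fun q _ => ?_
    show subMat A S m j * _ * subMat A S q k = _
    simp only [subMat, Matrix.submatrix_apply, id_eq]
    ring
  rw [hL, ← Finset.sum_coe_sort S
    (fun m => (volSq A (S.erase m) • Matrix.vecMulVec (A m) (A m)
      - Matrix.vecMulVec (A m) (A m) * quasiProj A (S.erase m)) j k)]
  refine Finset.sum_congr rfl fun m _ => ?_
  obtain ⟨mv, hm⟩ := m
  have hR : (volSq A (S.erase mv) • Matrix.vecMulVec (A mv) (A mv)
        - Matrix.vecMulVec (A mv) (A mv) * quasiProj A (S.erase mv)) j k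
      = A mv j * (volSq A (S.erase mv) * A mv k
          - ∑ l, A mv l * quasiProj A (S.erase mv) l k) := by
    simp only [Matrix.sub_apply, Matrix.smul_apply, Matrix.mul_apply,
      Matrix.vecMulVec_apply, smul_eq_mul, mul_sub, Finset.mul_sum]
    congr 1
    · ring
    · exact Finset.sum_congr rfl fun l _ => by ring
  rw [hR]
  congr 1
  -- core claim: key
  have hGT : subMat A (S.erase mv) * (subMat A (S.erase mv))ᵀ
      = (((subMat A S * (subMat A S)ᵀ)).submatrix
          (fun r : {r : {i // i ∈ S} // r ≠ ⟨mv, hm⟩} => (r : {i // i ∈ S}))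
          (fun r : {r : {i // i ∈ S} // r ≠ ⟨mv, hm⟩} => (r : {i // i ∈ S}))).submatrix
          (eraseEquiv hm) (eraseEquiv hm) := by
    ext p q
    show (subMat A (S.erase mv) * (subMat A (S.erase mv))ᵀ) p q = _
    simp only [Matrix.submatrix_apply, Matrix.mul_apply, Matrix.transpose_apply]
    exact Finset.sum_congr rfl fun l _ => rfl
  have hdetT : volSq A (S.erase mv)
      = (subMat A S * (subMat A S)ᵀ).adjugate ⟨mv, hm⟩ ⟨mv, hm⟩ := by
    rw [adjugate_diag_eq, volSq, hGT, Matrix.det_submatrix_equiv_self]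
  have hadjT : (subMat A (S.erase mv) * (subMat A (S.erase mv))ᵀ).adjugate
      = ((((subMat A S * (subMat A S)ᵀ)).submatrix
          (fun r : {r : {i // i ∈ S} // r ≠ ⟨mv, hm⟩} => (r : {i // i ∈ S}))
          (fun r : {r : {i // i ∈ S} // r ≠ ⟨mv, hm⟩} => (r : {i // i ∈ S}))).adjugate).submatrix
          (eraseEquiv hm) (eraseEquiv hm) := by
    rw [hGT, Matrix.adjugate_submatrix_equiv_self]
  have hQT : ∀ l, quasiProj A (S.erase mv) l k
      = ∑ q : {i // i ∈ S.erase mv}, (∑ p : {i // i ∈ S.erase mv},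
          A (↑p) l * (((subMat A S * (subMat A S)ᵀ)).submatrix
            (fun r : {r : {i // i ∈ S} // r ≠ ⟨mv, hm⟩} => (r : {i // i ∈ S}))
            (fun r : {r : {i // i ∈ S} // r ≠ ⟨mv, hm⟩} => (r : {i // i ∈ S}))).adjugate
              (eraseEquiv hm p) (eraseEquiv hm q)) * A (↑q) k := by
    intro l
    show ((subMat A (S.erase mv))ᵀ * (subMat A (S.erase mv) * (subMat A (S.erase mv))ᵀ).adjugate
        * subMat A (S.erase mv)) l k = _
    rw [hadjT]
    simp only [Matrix.mul_apply, Matrix.transpose_apply, Matrix.submatrix_apply, Finset.sum_mul]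
    exact Finset.sum_congr rfl fun q _ => Finset.sum_congr rfl fun p _ => rfl
  have hS1 : ∑ l, A mv l * quasiProj A (S.erase mv) l k
      = ∑ q' : {r : {i // i ∈ S} // r ≠ ⟨mv, hm⟩},
          (∑ p' : {r : {i // i ∈ S} // r ≠ ⟨mv, hm⟩},
            (subMat A S * (subMat A S)ᵀ) ⟨mv, hm⟩ (↑p')
            * (((subMat A S * (subMat A S)ᵀ)).submatrix
              (fun r : {r : {i // i ∈ S} // r ≠ ⟨mv, hm⟩} => (r : {i // i ∈ S}))
              (fun r : {r : {i // i ∈ S} // r ≠ ⟨mv, hm⟩} => (r : {i // i ∈ S}))).adjugate p' q')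
          * A (↑(q' : {i // i ∈ S})) k := by
    calc ∑ l, A mv l * quasiProj A (S.erase mv) l k
        = ∑ q : {i // i ∈ S.erase mv}, (∑ p : {i // i ∈ S.erase mv},
            (∑ l, A mv l * A (↑p) l) * (((subMat A S * (subMat A S)ᵀ)).submatrix
            (fun r : {r : {i // i ∈ S} // r ≠ ⟨mv, hm⟩} => (r : {i // i ∈ S}))
            (fun r : {r : {i // i ∈ S} // r ≠ ⟨mv, hm⟩} => (r : {i // i ∈ S}))).adjugate
              (eraseEquiv hm p) (eraseEquiv hm q)) * A (↑q) k := by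
          simp only [hQT, Finset.mul_sum, Finset.sum_mul]
          rw [Finset.sum_comm]
          refine Finset.sum_congr rfl fun q _ => ?_
          rw [Finset.sum_comm]
          refine Finset.sum_congr rfl fun p _ => ?_
          exact Finset.sum_congr rfl fun l _ => by ring
      _ = _ := by
          refine Fintype.sum_equiv (eraseEquiv hm) _ _ fun q => ?_
          congr 1
          refine Fintype.sum_equiv (eraseEquiv hm) _ _ fun p => ?_
          congr 1
  rw [hS1, hdetT, sub_eq_add_neg, ← Finset.sum_neg_distrib]
  rw [← Finset.add_sum_erase _
    (fun q => (subMat A S * (subMat A S)ᵀ).adjugate ⟨mv, hm⟩ q * A (↑q) k)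
    (Finset.mem_univ (⟨mv, hm⟩ : {i // i ∈ S}))]
  rw [Finset.sum_subtype (Finset.univ.erase (⟨mv, hm⟩ : {i // i ∈ S}))
    (p := fun q => q ≠ ⟨mv, hm⟩) (by simp)
    (f := fun q => (subMat A S * (subMat A S)ᵀ).adjugate ⟨mv, hm⟩ q * A (↑q) k)]
  congr 1
  refine Finset.sum_congr rfl fun q' _ => ?_
  rw [adjugate_offdiag_eq (subMat A S * (subMat A S)ᵀ) q'.2]
  rw [neg_mul, neg_inj]


end AuxLemmas

/-- Total quasi projector recursion: for `n ≥ 2`,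
`Φ_n = G (vol_{n−1} I − Φ_{n−1})`, where `G = AᵀA`. -/
theorem totalQuasiProj_recursion {M N : ℕ} (A : Matrix (Fin M) (Fin N) ℝ)
    {n : ℕ} (hn : 2 ≤ n) :
    totalQuasiProj A n =
      Aᵀ * A * (vol A (n - 1) • (1 : Matrix (Fin N) (Fin N) ℝ) - totalQuasiProj A (n - 1)) := by
  classical
  have hn1 : n - 1 + 1 = n := by omega
  set t : Finset (Fin M) → Fin M → Matrix (Fin N) (Fin N) ℝ :=
    fun T m => volSq A T • Matrix.vecMulVec (A m) (A m)
      - Matrix.vecMulVec (A m) (A m) * quasiProj A T with ht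
  have step1 : totalQuasiProj A n
      = ∑ S ∈ Finset.univ.powersetCard n, ∑ m ∈ S, t (S.erase m) m := by
    exact Finset.sum_congr rfl fun S _ => lemA A S
  have step2 : ∑ S ∈ Finset.univ.powersetCard n, ∑ m ∈ S, t (S.erase m) m
      = ∑ T ∈ Finset.univ.powersetCard (n - 1), ∑ m ∈ Tᶜ, t T m := by
    rw [Finset.sum_sigma', Finset.sum_sigma']
    refine Finset.sum_bij' (fun x _ => ⟨x.1.erase x.2, x.2⟩)
      (fun y _ => ⟨insert y.2 y.1, y.2⟩) ?_ ?_ ?_ ?_ ?_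
    · rintro ⟨S, m⟩ hx
      rw [Finset.mem_sigma] at hx ⊢
      obtain ⟨hS, hmS⟩ := hx
      rw [Finset.mem_powersetCard_univ] at hS ⊢
      exact ⟨by rw [Finset.card_erase_of_mem hmS, hS], Finset.mem_compl.mpr (Finset.notMem_erase _ _)⟩
    · rintro ⟨T, m⟩ hy
      rw [Finset.mem_sigma] at hy ⊢
      obtain ⟨hT, hmT⟩ := hy
      rw [Finset.mem_powersetCard_univ] at hT ⊢
      rw [Finset.mem_compl] at hmT
      exact ⟨by rw [Finset.card_insert_of_notMem hmT, hT, hn1], Finset.mem_insert_self _ _⟩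
    · rintro ⟨S, m⟩ hx
      rw [Finset.mem_sigma] at hx
      simp only [Finset.insert_erase hx.2]
    · rintro ⟨T, m⟩ hy
      rw [Finset.mem_sigma] at hy
      simp only [Finset.erase_insert (Finset.mem_compl.mp hy.2)]
    · rintro ⟨S, m⟩ _
      rfl
  have step3 : ∀ T : Finset (Fin M), ∑ m ∈ Tᶜ, t T m = ∑ m : Fin M, t T m := by
    intro T
    refine Finset.sum_subset (Finset.subset_univ Tᶜ) fun x _ hx => ?_
    have hxT : x ∈ T := by
      by_contra h
      exact hx (Finset.mem_compl.mpr h)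
    rw [ht]
    simp only
    rw [lemB A hxT, sub_self]
  have hAtA : ∑ m : Fin M, Matrix.vecMulVec (A m) (A m) = Aᵀ * A := by
    ext j k
    simp only [Matrix.sum_apply, Matrix.mul_apply, Matrix.vecMulVec_apply,
      Matrix.transpose_apply]
  have step4 : ∀ T : Finset (Fin M), ∑ m : Fin M, t T m
      = volSq A T • (Aᵀ * A) - (Aᵀ * A) * quasiProj A T := by
    intro T
    rw [ht]
    simp only
    rw [Finset.sum_sub_distrib, ← Finset.smul_sum, ← Finset.sum_mul, hAtA]
  rw [step1, step2]
  rw [Finset.sum_congr rfl fun T _ => (step3 T).trans (step4 T)]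
  rw [Finset.sum_sub_distrib, ← Finset.sum_smul, ← Finset.mul_sum]
  rw [Matrix.mul_sub, Matrix.mul_smul, Matrix.mul_one]
  rfl
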